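/- Let r, s, R > 0 and let p : ι → EuclideanSpace ℝ (Fin 2) be a finite family of points such that each closed disk of radius r centered at p(i) is contained in the closed disk of radius R centered at the origin (equivalently ‖p(i)‖ ≤ R − r for all i), and such that the disks are pairwise at distance at least 2s, i.e. dist(p(i), p(j)) ≥ 2r + 2s whenever i ≠ j. Then the number of points satisfies card ι ≤ ((R + s)/(r + s))². -/
import Mathlib

open MeasureTheory Metric Real

lemma euclidean_ball_vol (x : EuclideanSpace ℝ (Fin 2)) (t : ℝ) :
    volume (Metric.ball x t) = ENNReal.ofReal t ^ 2 * ENNReal.ofReal π := by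
  rw [EuclideanSpace.volume_ball]
  have h2 : Fintype.card (Fin 2) = 2 := by simp
  rw [h2]
  congr 1
  have : ((2:ℕ) : ℝ) / 2 + 1 = 2 := by norm_num
  rw [this, Real.Gamma_two, Real.sq_sqrt pi_pos.le]
  simp

/-- At most `((R+s)/(r+s))²` disks of radius `r`, pairwise at distance at least `2s`,
fit inside a disk of radius `R` in the Euclidean plane. -/
theorem euclidean_disk_packing_bound {ι : Type*} [Fintype ι] (r s R : ℝ)
    (hr : 0 < r) (hs : 0 < s) (hR : 0 < R)
    (p : ι → EuclideanSpace ℝ (Fin 2))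
    (hin : ∀ i, ‖p i‖ ≤ R - r)
    (hsep : ∀ i j, i ≠ j → 2 * r + 2 * s ≤ dist (p i) (p j)) :
    (Fintype.card ι : ℝ) ≤ ((R + s) / (r + s)) ^ 2 := by
  classical
  set ρ := r + s with hρ
  have hρ0 : 0 < ρ := by positivity
  have hdisj : Pairwise (Function.onFun Disjoint (fun i => Metric.ball (p i) ρ)) := by
    intro i j hij
    apply Metric.ball_disjoint_ball
    calc ρ + ρ = 2 * r + 2 * s := by ring
      _ ≤ dist (p i) (p j) := hsep i j hij
  have hsub : ∀ i, Metric.ball (p i) ρ ⊆ Metric.ball (0 : EuclideanSpace ℝ (Fin 2)) (R + s) := by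
    intro i x hx
    rw [Metric.mem_ball] at hx ⊢
    have hpi : dist (p i) 0 = ‖p i‖ := by simp
    calc dist x 0 ≤ dist x (p i) + dist (p i) 0 := dist_triangle _ _ _
      _ < ρ + (R - r) := by have := hin i; linarith
      _ = R + s := by rw [hρ]; ring
  have hvol : ∑' i, volume (Metric.ball (p i) ρ)
      ≤ volume (Metric.ball (0 : EuclideanSpace ℝ (Fin 2)) (R + s)) := by
    rw [← measure_iUnion hdisj fun i => measurableSet_ball]
    exact measure_mono (Set.iUnion_subset hsub)
  rw [tsum_fintype] at hvol
  simp only [euclidean_ball_vol, Finset.sum_const, Finset.card_univ, nsmul_eq_mul] at hvol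
  have hπ : ENNReal.ofReal π ≠ 0 := by
    simp [ENNReal.ofReal_eq_zero, not_le, pi_pos]
  have hvol2 : ((Fintype.card ι : ENNReal)) * ENNReal.ofReal ρ ^ 2
      ≤ ENNReal.ofReal (R + s) ^ 2 := by
    rw [← ENNReal.mul_le_mul_iff_left (c := ENNReal.ofReal π) hπ ENNReal.ofReal_ne_top]
    calc ((Fintype.card ι : ENNReal)) * ENNReal.ofReal ρ ^ 2 * ENNReal.ofReal π
        = ((Fintype.card ι : ENNReal)) * (ENNReal.ofReal ρ ^ 2 * ENNReal.ofReal π) := by ring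
      _ ≤ _ := hvol
  have hreal : ((Fintype.card ι : ℝ)) * ρ ^ 2 ≤ (R + s) ^ 2 := by
    have := hvol2
    rw [← ENNReal.ofReal_pow hρ0.le, ← ENNReal.ofReal_pow (by positivity : (0:ℝ) ≤ R + s),
      ← ENNReal.ofReal_natCast, ← ENNReal.ofReal_mul (by positivity)] at this
    exact (ENNReal.ofReal_le_ofReal_iff (by positivity)).mp this
  rw [div_pow, le_div_iff₀ (by positivity)]
  exact hreal
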